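/- arXiv:2310.08239 — 5 statements merged into one kernel-verified Lean document; each statement's English description precedes it below -/
import Mathlib

section
/- If X and Y are real square matrices of size (n+1)×(n+1) satisfying X ⇌ Y, then their adjugate matrices satisfy adj(X) ⇌ adj(Y). -/
/-- `X ⇌ Y`: each of `X`, `Y` is the reverse of the other, i.e.
`xᵢⱼ = y_{m-i, n-j}` for all `i`, `j` (indices starting at `0`). -/
def ReverseRel {m n : ℕ} (X Y : Matrix (Fin m) (Fin n) ℝ) : Prop :=
  ∀ i j, X i j = Y i.rev j.rev

/-- If `X` and `Y` are real square matrices of size `(n+1) × (n+1)` with `X ⇌ Y`,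
then `adj X ⇌ adj Y`. -/
theorem adjugate_reverseRel (n : ℕ) (X Y : Matrix (Fin (n + 1)) (Fin (n + 1)) ℝ)
    (h : ReverseRel X Y) : ReverseRel X.adjugate Y.adjugate := by
  have hX : X = Y.submatrix ⇑(Fin.revPerm) ⇑(Fin.revPerm) := by
    ext i j; exact h i j
  intro i j
  rw [hX, Matrix.adjugate_submatrix_equiv_self]
  rfl
end

section
/- Let P₀, …, Pₙ be a linearly independent family of real polynomials in two variables x, y which is a reflexive polynomial vector, let T = (t_{kj}) be a real (n+1)×(n+1) matrix, and define P̃ₖ = Σ_{j=0}^{n} t_{kj} Pⱼ for k = 0, …, n. Then the family P̃₀, …, P̃ₙ is a reflexive polynomial vector if and only if T is centrosymmetric. -/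
open MvPolynomial

/-- The ℝ-algebra automorphism of `ℝ[x,y]` interchanging the two variables. -/
noncomputable def swapVars : MvPolynomial (Fin 2) ℝ →ₐ[ℝ] MvPolynomial (Fin 2) ℝ :=
  MvPolynomial.rename ⇑(Equiv.swap (0 : Fin 2) 1)

/-- A real matrix `T` is centrosymmetric if `tₖⱼ = t_{n-k, n-j}` for all `k`, `j`
(indices starting at `0`). -/
def Centrosymmetric {m n : ℕ} (T : Matrix (Fin m) (Fin n) ℝ) : Prop :=
  ∀ i j, T i j = T i.rev j.rev

/-- Let `P₀, …, Pₙ` be a linearly independent reflexive polynomial vector in `ℝ[x,y]`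
(`σ(Pₖ) = P_{n-k}`), let `T` be a real `(n+1) × (n+1)` matrix, and let
`P̃ₖ = Σⱼ tₖⱼ Pⱼ`.  Then `P̃₀, …, P̃ₙ` is a reflexive polynomial vector iff `T` is
centrosymmetric. -/
theorem transformed_reflexive_iff_centrosymmetric (n : ℕ)
    (P : Fin (n + 1) → MvPolynomial (Fin 2) ℝ)
    (hli : LinearIndependent ℝ P)
    (hrefl : ∀ k, swapVars (P k) = P k.rev)
    (T : Matrix (Fin (n + 1)) (Fin (n + 1)) ℝ) :
    (∀ k : Fin (n + 1),
        swapVars (∑ j, T k j • P j) = ∑ j, T k.rev j • P j) ↔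
      Centrosymmetric T := by
  have key : ∀ k, swapVars (∑ j, T k j • P j) = ∑ j, T k j.rev • P j := by
    intro k
    rw [map_sum]
    simp_rw [map_smul, hrefl]
    exact Fintype.sum_equiv (Fin.revPerm) _ _ (fun j => by simp)
  constructor
  · intro h k j
    have hk := (key k).symm.trans (h k)
    have hdiff : ∑ i, (T k i.rev - T k.rev i) • P i = 0 := by
      simp [sub_smul, Finset.sum_sub_distrib, hk]
    have := Fintype.linearIndependent_iff.mp hli _ hdiff j.rev
    have h2 : T k j.rev.rev - T k.rev j.rev = 0 := this
    rw [Fin.rev_rev] at h2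
    linarith
  · intro h k
    rw [key k]
    refine Finset.sum_congr rfl fun j _ => ?_
    rw [h k j.rev, Fin.rev_rev]
end

section
/- Let u : ℝ[x,y] → ℝ be a reflexive linear moment functional, and fix n ≥ 0. Suppose that for each k = 0, …, n, Qₖ is a polynomial in ℝ[x,y] such that Qₖ − x^{n−k} y^{k} has total degree at most n−1, u(Qₖ · p) = 0 for every polynomial p of total degree at most n−1, and Qₖ is the unique polynomial with these two properties. Then σ(Qₖ) = Q_{n−k} for all k = 0, …, n; that is, the monic orthogonal polynomial vector (Q₀, …, Qₙ) is reflexive. -/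
open MvPolynomial

/-- `MonicOrth u n k Q` says: `Q - x^(n-k) y^k` has total degree at most `n - 1`
(every monomial of total degree `≥ n` has zero coefficient in `Q - x^(n-k) y^k`),
and `u (Q * p) = 0` for every polynomial `p` of total degree at most `n - 1`. -/
def MonicOrth (u : MvPolynomial (Fin 2) ℝ →ₗ[ℝ] ℝ) (n : ℕ) (k : Fin (n + 1))
    (Q : MvPolynomial (Fin 2) ℝ) : Prop :=
  (∀ d : Fin 2 →₀ ℕ, n ≤ d 0 + d 1 →
      (Q - X 0 ^ (n - (k : ℕ)) * X 1 ^ (k : ℕ)).coeff d = 0) ∧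
  (∀ p : MvPolynomial (Fin 2) ℝ, p.totalDegree < n → u (Q * p) = 0)

lemma swapVars_swapVars (p : MvPolynomial (Fin 2) ℝ) : swapVars (swapVars p) = p := by
  simp [swapVars, MvPolynomial.rename_rename, Equiv.self_comp_symm]
  rw [show (⇑(Equiv.swap (0 : Fin 2) 1) ∘ ⇑(Equiv.swap (0 : Fin 2) 1)) = id by
    ext i; simp [Equiv.swap_apply_self], MvPolynomial.rename_id]
  rfl

lemma monomial_as_prod (d : Fin 2 →₀ ℕ) (c : ℝ) :
    (monomial d c : MvPolynomial (Fin 2) ℝ) = C c * X 0 ^ d 0 * X 1 ^ d 1 := by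
  rw [MvPolynomial.monomial_eq, Finsupp.prod_fintype _ _ (fun i => pow_zero _),
    Fin.prod_univ_two, mul_assoc]

lemma swapVars_mon (a b : ℕ) :
    swapVars ((X 0 : MvPolynomial (Fin 2) ℝ) ^ a * X 1 ^ b) = X 0 ^ b * X 1 ^ a := by
  simp [swapVars, mul_comm]

lemma u_swapVars (u : MvPolynomial (Fin 2) ℝ →ₗ[ℝ] ℝ)
    (hu : ∀ a b : ℕ, u (X 0 ^ a * X 1 ^ b) = u (X 0 ^ b * X 1 ^ a))
    (p : MvPolynomial (Fin 2) ℝ) : u (swapVars p) = u p := by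
  have : u ∘ₗ swapVars.toLinearMap = u := by
    apply MvPolynomial.linearMap_ext
    intro s
    ext
    simp only [LinearMap.coe_comp, Function.comp_apply, AlgHom.toLinearMap_apply]
    rw [monomial_as_prod s 1, MvPolynomial.C_1, one_mul, swapVars_mon]
    exact hu (s 1) (s 0)
  calc u (swapVars p) = (u ∘ₗ swapVars.toLinearMap) p := rfl
    _ = u p := by rw [this]

/-- Let `u` be a reflexive moment functional on `ℝ[x,y]` and suppose, for each
`k = 0, …, n`, that `Qₖ` is the unique monic polynomial with leading term `x^(n-k) y^k`
orthogonal to all polynomials of total degree at most `n-1`.  Then `σ(Qₖ) = Q_{n-k}`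
for all `k`, i.e. the monic orthogonal polynomial vector `(Q₀, …, Qₙ)` is reflexive. -/
theorem monic_orthogonal_vector_reflexive (n : ℕ)
    (u : MvPolynomial (Fin 2) ℝ →ₗ[ℝ] ℝ)
    (hu : ∀ a b : ℕ, u (X 0 ^ a * X 1 ^ b) = u (X 0 ^ b * X 1 ^ a))
    (Q : Fin (n + 1) → MvPolynomial (Fin 2) ℝ)
    (hQ : ∀ k, MonicOrth u n k (Q k))
    (huniq : ∀ k, ∀ q : MvPolynomial (Fin 2) ℝ, MonicOrth u n k q → q = Q k) :
    ∀ k, swapVars (Q k) = Q k.rev := by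
  intro k
  have hk : (k : ℕ) ≤ n := Nat.lt_succ_iff.mp k.isLt
  have hrev : (k.rev : ℕ) = n - (k : ℕ) := by
    rw [Fin.val_rev]; omega
  apply huniq
  constructor
  · intro d hd
    have hlead : (X 0 : MvPolynomial (Fin 2) ℝ) ^ (n - (k.rev : ℕ)) * X 1 ^ (k.rev : ℕ)
        = swapVars (X 0 ^ (n - (k : ℕ)) * X 1 ^ (k : ℕ)) := by
      rw [swapVars_mon, hrev, Nat.sub_sub_self hk]
    rw [hlead, ← map_sub]
    set e : Fin 2 ≃ Fin 2 := Equiv.swap 0 1 with he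
    set d' : Fin 2 →₀ ℕ := Finsupp.mapDomain ⇑e d with hd'
    have hdd : Finsupp.mapDomain ⇑e d' = d := by
      rw [hd', ← Finsupp.mapDomain_comp,
        show (⇑e ∘ ⇑e) = id by ext i; simp [he, Equiv.swap_apply_self],
        Finsupp.mapDomain_id]
    have : (swapVars (Q k - X 0 ^ (n - (k : ℕ)) * X 1 ^ (k : ℕ))).coeff d
        = (Q k - X 0 ^ (n - (k : ℕ)) * X 1 ^ (k : ℕ)).coeff d' := by
      conv_lhs => rw [← hdd]
      exact MvPolynomial.coeff_rename_mapDomain ⇑e e.injective _ d'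
    rw [this]
    apply (hQ k).1
    have h0 : d' 0 = d 1 := by
      rw [hd', Finsupp.mapDomain_equiv_apply]; simp [he]
    have h1 : d' 1 = d 0 := by
      rw [hd', Finsupp.mapDomain_equiv_apply]; simp [he]
    omega
  · intro p hp
    have hps : p = swapVars (swapVars p) := (swapVars_swapVars p).symm
    rw [hps, ← map_mul, u_swapVars u hu]
    apply (hQ k).2
    calc (swapVars p).totalDegree ≤ p.totalDegree :=
          MvPolynomial.totalDegree_rename_le _ p
      _ < n := hp
end

section
/- Fix n ≥ 1. Let Q⁺₀,…,Q⁺_{n+1}, Q₀,…,Qₙ, and Q⁻₀,…,Q⁻_{n−1} be families of polynomials in ℝ[x,y], each of which is a reflexive polynomial vector (σ(Q⁺ₖ) = Q⁺_{n+1−k}, σ(Qₖ) = Q_{n−k}, σ(Q⁻ₖ) = Q⁻_{n−1−k}). Suppose the combined family {Q₀,…,Qₙ, Q⁻₀,…,Q⁻_{n−1}} is linearly independent over ℝ. Suppose there are real matrices C₁, C₂ of size (n+1)×(n+1) and D₁, D₂ of size (n+1)×n such that for every k = 0,…,n: x·Qₖ = Q⁺ₖ + Σ_{j=0}^{n} (C₁)_{kj}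 Qⱼ + Σ_{j=0}^{n−1} (D₁)_{kj} Q⁻ⱼ and y·Qₖ = Q⁺_{k+1} + Σ_{j=0}^{n} (C₂)_{kj} Qⱼ + Σ_{j=0}^{n−1} (D₂)_{kj} Q⁻ⱼ. Then C₁ ⇌ C₂ and D₁ ⇌ D₂. -/
open MvPolynomial

/-- Three-term relations for `n = m + 1 ≥ 1`: if `Q⁺` (degree `n+1`), `Q` (degree `n`)
and `Q⁻` (degree `n-1`) are reflexive polynomial vectors, the combined family
`{Q, Q⁻}` is linearly independent, and
`x Qₖ = Q⁺ₖ + Σⱼ (C₁)ₖⱼ Qⱼ + Σⱼ (D₁)ₖⱼ Q⁻ⱼ`,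
`y Qₖ = Q⁺ₖ₊₁ + Σⱼ (C₂)ₖⱼ Qⱼ + Σⱼ (D₂)ₖⱼ Q⁻ⱼ`,
then `C₁ ⇌ C₂` and `D₁ ⇌ D₂`. -/
theorem three_term_coefficients_reverseRel (m : ℕ)
    (Qp : Fin (m + 3) → MvPolynomial (Fin 2) ℝ)
    (Q : Fin (m + 2) → MvPolynomial (Fin 2) ℝ)
    (Qm : Fin (m + 1) → MvPolynomial (Fin 2) ℝ)
    (hQp : ∀ k, swapVars (Qp k) = Qp k.rev)
    (hQ : ∀ k, swapVars (Q k) = Q k.rev)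
    (hQm : ∀ k, swapVars (Qm k) = Qm k.rev)
    (hli : LinearIndependent ℝ (Sum.elim Q Qm))
    (C₁ C₂ : Matrix (Fin (m + 2)) (Fin (m + 2)) ℝ)
    (D₁ D₂ : Matrix (Fin (m + 2)) (Fin (m + 1)) ℝ)
    (hx : ∀ k : Fin (m + 2),
      X 0 * Q k = Qp k.castSucc + ∑ j, C₁ k j • Q j + ∑ j, D₁ k j • Qm j)
    (hy : ∀ k : Fin (m + 2),
      X 1 * Q k = Qp k.succ + ∑ j, C₂ k j • Q j + ∑ j, D₂ k j • Qm j) :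
    ReverseRel C₁ C₂ ∧ ReverseRel D₁ D₂ := by
  have key : ∀ k : Fin (m + 2), (∀ j₁ : Fin (m + 2), C₁ k.rev j₁.rev = C₂ k j₁) ∧
      (∀ j₂ : Fin (m + 1), D₁ k.rev j₂.rev = D₂ k j₂) := by
    intro k
    have h1 := congrArg swapVars (hx k.rev)
    have hswapX : swapVars (X 0 : MvPolynomial (Fin 2) ℝ) = X 1 := by
      simp [swapVars, rename_X]
    rw [map_mul, hswapX, hQ, Fin.rev_rev, map_add, map_add, map_sum, map_sum, hQp,
      Fin.rev_castSucc, Fin.rev_rev] at h1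
    simp only [map_smul, hQ, hQm] at h1
    have e1 : ∑ x : Fin (m + 2), C₁ k.rev x • Q x.rev = ∑ x, C₁ k.rev x.rev • Q x :=
      Fintype.sum_bijective Fin.rev Fin.rev_bijective _ _ (fun j => by rw [Fin.rev_rev])
    have e2 : ∑ x : Fin (m + 1), D₁ k.rev x • Qm x.rev = ∑ x, D₁ k.rev x.rev • Qm x :=
      Fintype.sum_bijective Fin.rev Fin.rev_bijective _ _ (fun j => by rw [Fin.rev_rev])
    rw [e1, e2] at h1
    have h2 := hy k
    rw [h1] at h2
    have h3 : ∑ i : Fin (m + 2) ⊕ Fin (m + 1),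
        (Sum.elim (fun j => C₁ k.rev j.rev - C₂ k j)
          (fun j => D₁ k.rev j.rev - D₂ k j) i) • Sum.elim Q Qm i = 0 := by
      rw [Fintype.sum_sum_type]
      simp only [Sum.elim_inl, Sum.elim_inr, sub_smul]
      rw [Finset.sum_sub_distrib, Finset.sum_sub_distrib]
      linear_combination h2
    have h4 := Fintype.linearIndependent_iff.mp hli _ h3
    constructor
    · intro j₁
      have := h4 (Sum.inl j₁)
      simpa [sub_eq_zero] using this
    · intro j₂
      have := h4 (Sum.inr j₂)
      simpa [sub_eq_zero] using this
  constructor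
  · intro i j
    have := (key i.rev).1 j.rev
    rwa [Fin.rev_rev, Fin.rev_rev] at this
  · intro i j
    have := (key i.rev).2 j.rev
    rwa [Fin.rev_rev, Fin.rev_rev] at this
end

section
/- Let Q be a family of polynomial vectors, where for each n ≥ 0, Qₙ = (Qₙ,₀, …, Qₙ,ₙ) with entries in ℝ[x,y], and Q₀,₀ = 1. Suppose there are real matrices C₁⁽ⁿ⁾, C₂⁽ⁿ⁾ of size (n+1)×(n+1) for each n ≥ 0, and D₁⁽ⁿ⁾, D₂⁽ⁿ⁾ of size (n+1)×n for each n ≥ 1, such that: (i) x·Q₀,₀ = Q₁,₀ + (C₁⁽⁰⁾)₀₀·Q₀,₀ and y·Q₀,₀ = Q₁,₁ + (C₂⁽⁰⁾)₀₀·Q₀,₀; (ii) for every n ≥ 1 and k = 0,…,n: x·Qₙ,ₖ = Q_{n+1},ₖ + Σ_{j=0}^{n} (C₁⁽ⁿ⁾)_{kj} Qₙ,ⱼ + Σ_{j=0}^{n−1} (D₁⁽ⁿ⁾)_{kj} Q_{n−1},ⱼ and y·Qₙ,ₖ = Q_{n+1},ₖ₊₁ + Σ_{j=0}^{n} (C₂⁽ⁿ⁾)_{kj}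 Qₙ,ⱼ + Σ_{j=0}^{n−1} (D₂⁽ⁿ⁾)_{kj} Q_{n−1},ⱼ; and (iii) C₁⁽ⁿ⁾ ⇌ C₂⁽ⁿ⁾ for all n ≥ 0 and D₁⁽ⁿ⁾ ⇌ D₂⁽ⁿ⁾ for all n ≥ 1. Then every polynomial vector Qₙ is reflexive, i.e., σ(Qₙ,ₖ) = Qₙ,ₙ₋ₖ for all n ≥ 0 and 0 ≤ k ≤ n. -/
open MvPolynomial

lemma swapVars_X0 : swapVars (X 0 : MvPolynomial (Fin 2) ℝ) = X 1 := by
  simp [swapVars, rename_X]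

lemma swapVars_X1 : swapVars (X 1 : MvPolynomial (Fin 2) ℝ) = X 0 := by
  simp [swapVars, rename_X]

/-- If a system of polynomial vectors `Qₙ = (Qₙ,₀, …, Qₙ,ₙ)` with `Q₀,₀ = 1` satisfies
the three-term relations with coefficient matrices `C₁⁽ⁿ⁾ ⇌ C₂⁽ⁿ⁾` (for `n ≥ 0`) and
`D₁⁽ⁿ⁾ ⇌ D₂⁽ⁿ⁾` (for `n ≥ 1`; here `D₁ n` plays the role of `D⁽ⁿ⁺¹⁾`), then every
polynomial vector `Qₙ` is reflexive: `σ(Qₙ,ₖ) = Qₙ,ₙ₋ₖ`. -/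
theorem reflexive_of_three_term_reverseRel
    (Q : (n : ℕ) → Fin (n + 1) → MvPolynomial (Fin 2) ℝ)
    (hQ00 : Q 0 0 = 1)
    (C₁ C₂ : (n : ℕ) → Matrix (Fin (n + 1)) (Fin (n + 1)) ℝ)
    (D₁ D₂ : (n : ℕ) → Matrix (Fin (n + 2)) (Fin (n + 1)) ℝ)
    (hx0 : X 0 * Q 0 0 = Q 1 0 + C₁ 0 0 0 • Q 0 0)
    (hy0 : X 1 * Q 0 0 = Q 1 1 + C₂ 0 0 0 • Q 0 0)
    (hx : ∀ n : ℕ, ∀ k : Fin (n + 2),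
      X 0 * Q (n + 1) k =
        Q (n + 2) k.castSucc + ∑ j, C₁ (n + 1) k j • Q (n + 1) j +
          ∑ j : Fin (n + 1), D₁ n k j • Q n j)
    (hy : ∀ n : ℕ, ∀ k : Fin (n + 2),
      X 1 * Q (n + 1) k =
        Q (n + 2) k.succ + ∑ j, C₂ (n + 1) k j • Q (n + 1) j +
          ∑ j : Fin (n + 1), D₂ n k j • Q n j)
    (hC : ∀ n, ReverseRel (C₁ n) (C₂ n))
    (hD : ∀ n, ReverseRel (D₁ n) (D₂ n)) :
    ∀ (n : ℕ) (k : Fin (n + 1)), swapVars (Q n k) = Q n k.rev := by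
  -- two-step induction
  suffices H : ∀ n : ℕ, (∀ k : Fin (n + 1), swapVars (Q n k) = Q n k.rev) ∧
      (∀ k : Fin (n + 2), swapVars (Q (n + 1) k) = Q (n + 1) k.rev) by
    intro n
    cases n with
    | zero => exact (H 0).1
    | succ m => exact (H m).2
  intro n
  induction n with
  | zero =>
    constructor
    · intro k
      have hk : k = 0 := Fin.fin_one_eq_zero k
      have hk' : k.rev = 0 := Fin.fin_one_eq_zero k.rev
      rw [hk] at hk' ⊢
      rw [hk', hQ00, map_one]
    · -- n = 1
      have h10 : swapVars (Q 1 0) = Q 1 1 := by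
        have e1 : Q 1 0 = X 0 * Q 0 0 - C₁ 0 0 0 • Q 0 0 := by
          rw [hx0]; ring
        have hc : C₁ 0 0 0 = C₂ 0 0 0 := by
          have := hC 0 0 0
          simpa using this
        rw [e1, map_sub, map_mul, map_smul, swapVars_X0, hQ00, map_one, ← hQ00, hy0, hc]
        ring
      have h11 : swapVars (Q 1 1) = Q 1 0 := by
        rw [← h10, swapVars_swapVars]
      intro k
      fin_cases k
      · simpa using h10
      · simpa using h11
  | succ n ih =>
    obtain ⟨ih1, ih2⟩ := ih
    refine ⟨ih2, ?_⟩
    -- prove for n + 2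
    have key : ∀ k : Fin (n + 2), swapVars (Q (n + 2) k.castSucc) = Q (n + 2) k.castSucc.rev := by
      intro k
      have e1 : Q (n + 2) k.castSucc = X 0 * Q (n + 1) k
          - ∑ j, C₁ (n + 1) k j • Q (n + 1) j - ∑ j : Fin (n + 1), D₁ n k j • Q n j := by
        rw [hx n k]; ring
      have sC : ∑ j : Fin (n + 2), C₁ (n + 1) k j • Q (n + 1) j.rev
          = ∑ j : Fin (n + 2), C₂ (n + 1) k.rev j • Q (n + 1) j := by
        rw [← Equiv.sum_comp (Fin.revPerm) (fun j => C₂ (n + 1) k.rev j • Q (n + 1) j)]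
        refine Finset.sum_congr rfl fun j _ => ?_
        rw [hC (n + 1) k j]
        simp [Fin.revPerm]
      have sD : ∑ j : Fin (n + 1), D₁ n k j • Q n j.rev
          = ∑ j : Fin (n + 1), D₂ n k.rev j • Q n j := by
        rw [← Equiv.sum_comp (Fin.revPerm) (fun j => D₂ n k.rev j • Q n j)]
        refine Finset.sum_congr rfl fun j _ => ?_
        rw [hD n k j]
        simp [Fin.revPerm]
      rw [e1, map_sub, map_sub, map_mul, map_sum, map_sum, swapVars_X0, ih2 k]
      simp only [map_smul, ih1, ih2]
      rw [sC, sD, hy n k.rev, Fin.rev_castSucc]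
      ring
    intro k
    rcases Fin.eq_castSucc_or_eq_last k with ⟨j, rfl⟩ | rfl
    · exact key j
    · -- last case via involution
      have h0 : swapVars (Q (n + 2) ((0 : Fin (n + 2)).castSucc)) = Q (n + 2) (Fin.last (n + 2)) := by
        rw [key 0, Fin.rev_castSucc, Fin.rev_zero, Fin.succ_last]
      have := congrArg swapVars h0
      rw [swapVars_swapVars] at this
      rw [← this, Fin.rev_last]
      simp
end
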